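/- For every N ≥ 3 and every list of integers p₁, …, p_N all ≥ 2, there exists a finite group G and elements y₁, …, y_N ∈ G such that y_i has order exactly p_i for each i and y₁·y₂·⋯·y_N = 1. -/

import Mathlib

open Matrix

namespace St10

variable {F : Type} [Field F]

abbrev Mat (F : Type) [Field F] := Matrix (Fin 2) (Fin 2) F

/-- the subgroup of scalar matrices -/
def Zc (F : Type) [Field F] : Subgroup (Mat F)ˣ :=
  (Units.map (algebraMap F (Mat F)).toMonoidHom).range

lemma Zc_comm {z : (Mat F)ˣ} (hz : z ∈ Zc F) (u : (Mat F)ˣ) : z * u = u * z := by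
  obtain ⟨c, rfl⟩ := hz
  apply Units.ext
  simp only [Units.val_mul, Units.coe_map, RingHom.toMonoidHom_eq_coe, MonoidHom.coe_coe]
  exact Algebra.commutes _ _

lemma conj_eq_of_mem_Zc {z : (Mat F)ˣ} (hz : z ∈ Zc F) (g : (Mat F)ˣ) : g * z * g⁻¹ = z := by
  rw [mul_assoc, Zc_comm hz, ← mul_assoc]
  simp

instance : (Zc F).Normal := by
  constructor
  intro z hz g
  rw [conj_eq_of_mem_Zc hz g]; exact hz

lemma conj_mem_Zc_iff (P w : (Mat F)ˣ) : P * w * P⁻¹ ∈ Zc F ↔ w ∈ Zc F := by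
  constructor
  · intro hmem
    have h3 : P⁻¹ * (P * w * P⁻¹) * P⁻¹⁻¹ = w := by group
    rw [← h3, conj_eq_of_mem_Zc hmem]
    exact hmem
  · intro hw
    rw [conj_eq_of_mem_Zc hw]
    exact hw

lemma pow_mem_Zc_iff (x y : Fˣ) (D : (Mat F)ˣ)
    (hD : (D : Mat F) = diagonal ![(x:F), y]) (n : ℕ) :
    D ^ n ∈ Zc F ↔ x ^ n = y ^ n := by
  have hDn : ((D ^ n : (Mat F)ˣ) : Mat F) = diagonal (![(x:F), y] ^ n) := by
    rw [Units.val_pow_eq_pow_val, hD, diagonal_pow]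
  constructor
  · rintro ⟨c, hc⟩
    have hval : algebraMap F (Mat F) c = diagonal (![(x:F), y] ^ n) := by
      have := congrArg Units.val hc
      simpa [hDn] using this
    rw [algebraMap_eq_diagonal] at hval
    have h0 := congrFun (congrFun hval 0) 0
    have h1 := congrFun (congrFun hval 1) 1
    simp [diagonal_apply_eq, Pi.pow_apply] at h0 h1
    apply Units.ext
    push_cast
    rw [← h0, ← h1]
  · intro hxy
    have hxy' : (x : F) ^ n = (y : F) ^ n := by
      have := congrArg Units.val hxy; push_cast at this; exact this
    refine ⟨x ^ n, ?_⟩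
    apply Units.ext
    simp only [Units.coe_map, RingHom.toMonoidHom_eq_coe, MonoidHom.coe_coe, hDn]
    have harg : (algebraMap F (Fin 2 → F)) ((x : Fˣ) ^ n : Fˣ) = ![(x:F), y] ^ n := by
      funext i
      fin_cases i <;>
        simp only [Pi.algebraMap_apply, Pi.pow_apply, Units.val_pow_eq_pow_val] <;>
        simp [hxy']
    rw [algebraMap_eq_diagonal, harg]

lemma order_eq (A P : (Mat F)ˣ) (x y : Fˣ)
    (h : (A : Mat F) * P = (P : Mat F) * diagonal ![(x:F), y]) :
    orderOf ((A : (Mat F)ˣ ⧸ Zc F)) = orderOf (x * y⁻¹) := by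
  have hdet : IsUnit (diagonal ![(x:F), y]).det := by
    simp [det_diagonal]
  set D : (Mat F)ˣ := ((isUnit_iff_isUnit_det _).mpr hdet).unit with hDdef
  have hDval : (D : Mat F) = diagonal ![(x:F), y] := IsUnit.unit_spec _
  have hAPD : A * P = P * D := by
    apply Units.ext
    simp only [Units.val_mul, hDval, h]
  have hA : A = P * D * P⁻¹ := by
    rw [← hAPD, mul_assoc]
    simp
  rw [orderOf_eq_orderOf_iff]
  intro n
  rw [show ((A : (Mat F)ˣ ⧸ Zc F)) = QuotientGroup.mk A from rfl, ← QuotientGroup.mk_pow,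
    QuotientGroup.eq_one_iff]
  rw [hA, conj_pow, conj_mem_Zc_iff, pow_mem_Zc_iff x y D hDval]
  rw [mul_pow, inv_pow, mul_inv_eq_one]




/-- There is a finite field whose unit group has order divisible by any given `L`. -/
lemma exists_field (L : ℕ) (hL : 0 < L) :
    ∃ (F : Type) (_ : Field F) (_ : Finite F), L ∣ Nat.card Fˣ := by
  obtain ⟨ℓ, hℓL, hℓp⟩ := Nat.exists_infinite_primes (L + 1)
  have hcop : ℓ.Coprime L := by
    rcases Nat.coprime_or_dvd_of_prime hℓp L with h | h
    · exact h
    · exact absurd (Nat.le_of_dvd hL h) (by omega)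
  haveI : NeZero L := ⟨hL.ne'⟩
  haveI : Fact ℓ.Prime := ⟨hℓp⟩
  set u : (ZMod L)ˣ := ZMod.unitOfCoprime ℓ hcop with hu
  set k := orderOf u with hk
  have hk0 : k ≠ 0 := (orderOf_pos u).ne'
  have huk : u ^ k = 1 := pow_orderOf_eq_one u
  have hcast : ((ℓ ^ k : ℕ) : ZMod L) = ((1 : ℕ) : ZMod L) := by
    have : ((u : ZMod L)) ^ k = 1 := by
      rw [← Units.val_pow_eq_pow_val, huk, Units.val_one]
    rw [ZMod.coe_unitOfCoprime] at this
    push_cast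
    exact this
  have hdvd : L ∣ ℓ ^ k - 1 := by
    have := (ZMod.natCast_eq_natCast_iff _ _ _).mp hcast.symm
    exact (Nat.modEq_iff_dvd' (Nat.one_le_pow _ _ hℓp.pos)).mp this
  refine ⟨GaloisField ℓ k, inferInstance, inferInstance, ?_⟩
  rw [Nat.card_units, GaloisField.card ℓ k hk0]
  exact hdvd

lemma gen_pow_order {G : Type} [Group G] [Finite G] (g : G) (hg : orderOf g = Nat.card G)
    {d : ℕ} (hd : d ∣ Nat.card G) : orderOf (g ^ (Nat.card G / d)) = d := by
  have hM0 : Nat.card G ≠ 0 := Nat.card_pos.ne'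
  rw [orderOf_pow, hg, Nat.gcd_eq_right (Nat.div_dvd_of_dvd hd), Nat.div_div_self hd hM0]

lemma triple (p q r : ℕ) (hp : 2 ≤ p) (hq : 2 ≤ q) (hr : 2 ≤ r) :
    ∃ (G : Type) (_ : Group G) (_ : Finite G) (a b c : G),
      orderOf a = p ∧ orderOf b = q ∧ orderOf c = r ∧ a * b * c = 1 := by
  obtain ⟨F, _, _, hdvd⟩ := exists_field (2 * p * q * r) (by positivity)
  obtain ⟨g, hg⟩ := IsCyclic.exists_generator (α := Fˣ)
  have hgord : orderOf g = Nat.card Fˣ := orderOf_eq_card_of_forall_mem_zpowers hg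
  set M := Nat.card Fˣ with hM
  have hM0 : M ≠ 0 := Nat.card_pos.ne'
  have h2p : 2 * p ∣ M := dvd_trans ⟨q * r, by ring⟩ hdvd
  have h2q : 2 * q ∣ M := dvd_trans ⟨p * r, by ring⟩ hdvd
  have h2r : 2 * r ∣ M := dvd_trans ⟨p * q, by ring⟩ hdvd
  have hpM : p ∣ M := dvd_trans (dvd_mul_left p 2) h2p
  have hqM : q ∣ M := dvd_trans (dvd_mul_left q 2) h2q
  have hrM : r ∣ M := dvd_trans (dvd_mul_left r 2) h2r
  set lu : Fˣ := g ^ (M / p) with hlu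
  set mu' : Fˣ := g ^ (M / q) with hmu'
  set nu : Fˣ := g ^ (M / r) with hnu
  have hluord : orderOf lu = p := gen_pow_order g hgord hpM
  have hmuord : orderOf mu' = q := gen_pow_order g hgord hqM
  have hnuord : orderOf nu = r := gen_pow_order g hgord hrM
  set Xu : Fˣ := g ^ (M / (2 * p) + M / (2 * q) + M / (2 * r)) with hXu
  set Yu : Fˣ := lu * mu' * Xu⁻¹ with hYu
  have e1 : 2 * (M / (2 * p)) = M / p := by
    obtain ⟨m, hm⟩ := h2p
    rw [hm, Nat.mul_div_cancel_left m (by positivity), show 2 * p * m = p * (2 * m) by ring,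
      Nat.mul_div_cancel_left _ (by omega)]
  have e2 : 2 * (M / (2 * q)) = M / q := by
    obtain ⟨m, hm⟩ := h2q
    rw [hm, Nat.mul_div_cancel_left m (by positivity), show 2 * q * m = q * (2 * m) by ring,
      Nat.mul_div_cancel_left _ (by omega)]
  have e3 : 2 * (M / (2 * r)) = M / r := by
    obtain ⟨m, hm⟩ := h2r
    rw [hm, Nat.mul_div_cancel_left m (by positivity), show 2 * r * m = r * (2 * m) by ring,
      Nat.mul_div_cancel_left _ (by omega)]
  have hX2 : Xu ^ 2 = lu * mu' * nu := by
    rw [hXu, ← pow_mul, hlu, hmu', hnu, ← pow_add, ← pow_add]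
    congr 1
    omega
  have hratio : Xu * Yu⁻¹ = nu := by
    have h1 : Xu * Yu⁻¹ = Xu ^ 2 * (lu * mu')⁻¹ := by
      rw [hYu, sq]; group
    rw [h1, hX2, mul_comm (lu * mu') nu]
    exact mul_inv_cancel_right nu (lu * mu')
  have hXuYu : Xu * Yu = lu * mu' := by
    rw [hYu, mul_comm Xu]
    exact inv_mul_cancel_right _ _
  set lam : F := (lu : F) with hlamd
  set mu : F := (mu' : F) with hmud
  set X : F := (Xu : F) with hXd
  set Y : F := (Yu : F) with hYd
  have hlam0 : lam ≠ 0 := Units.ne_zero lu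
  have hmu0 : mu ≠ 0 := Units.ne_zero mu'
  have hlam1 : lam ≠ 1 := by
    intro h
    have : lu = 1 := Units.ext h
    rw [this, orderOf_one] at hluord; omega
  have hmu1 : mu ≠ 1 := by
    intro h
    have : mu' = 1 := Units.ext h
    rw [this, orderOf_one] at hmuord; omega
  have hXY : X * Y = lam * mu := by
    have := congrArg (Units.val) hXuYu; push_cast at this; exact this
  have hXneY : X ≠ Y := by
    intro h
    have : Xu = Yu := Units.ext h
    rw [this, mul_inv_cancel] at hratio
    rw [← hratio, orderOf_one] at hnuord; omega
  obtain ⟨t, ht⟩ : ∃ t : F, t = X + Y - lam - mu := ⟨_, rfl⟩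
  -- the matrices and their diagonalizations
  set Am : Mat F := !![lam, 1; 0, 1] with hAm
  set Bm : Mat F := !![1, 0; t, mu] with hBm
  have hAdet : IsUnit Am.det := by
    rw [hAm, det_fin_two_of]
    simpa using isUnit_iff_ne_zero.mpr hlam0
  have hBdet : IsUnit Bm.det := by
    rw [hBm, det_fin_two_of]
    simpa using isUnit_iff_ne_zero.mpr hmu0
  set A : (Mat F)ˣ := ((isUnit_iff_isUnit_det Am).mpr hAdet).unit with hA
  set B : (Mat F)ˣ := ((isUnit_iff_isUnit_det Bm).mpr hBdet).unit with hB
  have hAval : (A : Mat F) = Am := IsUnit.unit_spec _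
  have hBval : (B : Mat F) = Bm := IsUnit.unit_spec _
  -- P for A
  set PAm : Mat F := !![1, 1; 0, 1 - lam] with hPAm
  have hPAdet : IsUnit PAm.det := by
    rw [hPAm, det_fin_two_of]
    simpa using isUnit_iff_ne_zero.mpr (sub_ne_zero.mpr (Ne.symm hlam1))
  set PA : (Mat F)ˣ := ((isUnit_iff_isUnit_det PAm).mpr hPAdet).unit with hPA
  have hPAval : (PA : Mat F) = PAm := IsUnit.unit_spec _
  have hdiagA : (A : Mat F) * PA = (PA : Mat F) * diagonal ![((lu : F)), (((1:Fˣ) : F))] := by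
    rw [hAval, hPAval, hAm, hPAm, Units.val_one, ← hlamd]
    ext i j
    fin_cases i <;> fin_cases j <;>
      simp [mul_apply, Fin.sum_univ_two, diagonal] <;> ring1
  -- P for B
  set PBm : Mat F := !![1 - mu, 0; t, 1] with hPBm
  have hPBdet : IsUnit PBm.det := by
    rw [hPBm, det_fin_two_of]
    simpa using isUnit_iff_ne_zero.mpr (sub_ne_zero.mpr (Ne.symm hmu1))
  set PB : (Mat F)ˣ := ((isUnit_iff_isUnit_det PBm).mpr hPBdet).unit with hPB
  have hPBval : (PB : Mat F) = PBm := IsUnit.unit_spec _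
  have hdiagB : (B : Mat F) * PB = (PB : Mat F) * diagonal ![(((1:Fˣ) : F)), ((mu' : F))] := by
    rw [hBval, hPBval, hBm, hPBm, Units.val_one, ← hmud]
    ext i j
    fin_cases i <;> fin_cases j <;>
      simp [mul_apply, Fin.sum_univ_two, diagonal] <;> ring1
  -- P for A * B
  set PCm : Mat F := !![mu, mu; X - (lam + t), Y - (lam + t)] with hPCm
  have hPCdet : IsUnit PCm.det := by
    rw [hPCm, det_fin_two_of]
    have : mu * (Y - (lam + t)) - mu * (X - (lam + t)) = mu * (Y - X) := by ring
    rw [this]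
    exact isUnit_iff_ne_zero.mpr (mul_ne_zero hmu0 (sub_ne_zero.mpr (Ne.symm hXneY)))
  set PC : (Mat F)ˣ := ((isUnit_iff_isUnit_det PCm).mpr hPCdet).unit with hPC
  have hPCval : (PC : Mat F) = PCm := IsUnit.unit_spec _
  have hdiagC : ((A * B : (Mat F)ˣ) : Mat F) * PC
      = (PC : Mat F) * diagonal ![((Xu : F)), ((Yu : F))] := by
    rw [Units.val_mul, hAval, hBval, hAm, hBm, hPCval, hPCm, ← hXd, ← hYd]
    subst ht
    ext i j
    fin_cases i <;> fin_cases j <;>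
      simp [mul_apply, Fin.sum_univ_two, diagonal] <;>
      (first
        | ring1
        | linear_combination hXY
        | linear_combination -hXY)
  -- assemble
  have horda : orderOf ((A : (Mat F)ˣ ⧸ Zc F)) = p := by
    rw [order_eq A PA lu 1 hdiagA]
    simpa using hluord
  have hordb : orderOf ((B : (Mat F)ˣ ⧸ Zc F)) = q := by
    rw [order_eq B PB 1 mu' hdiagB]
    simpa using hmuord
  have hordc : orderOf (((A * B : (Mat F)ˣ) : (Mat F)ˣ ⧸ Zc F)) = r := by
    rw [order_eq (A * B) PC Xu Yu hdiagC, hratio]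
    exact hnuord
  refine ⟨(Mat F)ˣ ⧸ Zc F, inferInstance, inferInstance,
    (A : (Mat F)ˣ ⧸ Zc F), (B : (Mat F)ˣ ⧸ Zc F), ((A * B : (Mat F)ˣ) : (Mat F)ˣ ⧸ Zc F)⁻¹,
    horda, hordb, ?_, ?_⟩
  · rw [orderOf_inv]
    exact hordc
  · have hmul : ((A * B : (Mat F)ˣ) : (Mat F)ˣ ⧸ Zc F)
        = (A : (Mat F)ˣ ⧸ Zc F) * (B : (Mat F)ˣ ⧸ Zc F) := rfl
    rw [hmul]
    group


lemma main (N : ℕ) (hN : 3 ≤ N) : ∀ (p : Fin N → ℕ), (∀ i, 2 ≤ p i) →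
    ∃ (G : Type) (_ : Group G) (_ : Finite G) (y : Fin N → G),
      (∀ i, orderOf (y i) = p i) ∧ (List.ofFn y).prod = 1 := by
  induction N, hN using Nat.le_induction with
  | base =>
    intro p hp
    obtain ⟨G, gG, gF, a, b, c, ha, hb, hc, habc⟩ :=
      triple (p 0) (p 1) (p 2) (hp 0) (hp 1) (hp 2)
    refine ⟨G, gG, gF, ![a, b, c], ?_, ?_⟩
    · intro i; fin_cases i <;> simpa
    · simpa [mul_assoc] using habc
  | succ n hn ih =>
    intro p hp
    obtain ⟨G, gG, gF, y, hy, hprod⟩ := ih (fun i => p i.succ) (fun i => hp _)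
    obtain ⟨H, gH, gFH, a, b, c, ha, hb, hc, habc⟩ :=
      triple (p 0) (p 1) (p 2) (hp 0) (hp 1) (hp 2)
    obtain ⟨K, rfl⟩ : ∃ K, n = K + 3 := ⟨n - 3, by omega⟩
    set w : Fin (K + 3) → H := fun i => if i.val = 0 then b else if i.val = 1 then c else 1
      with hw
    set f : Fin (K + 3) → H × G := fun i => (w i, y i) with hf
    refine ⟨H × G, inferInstance, inferInstance, Fin.cons (a, 1) f, ?_, ?_⟩
    · intro i
      induction i using Fin.cases with
      | zero =>
        rw [Fin.cons_zero, Prod.orderOf]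
        simp [ha]
      | succ j =>
        rw [Fin.cons_succ, show f j = (w j, y j) from rfl, Prod.orderOf]
        simp only
        rw [hy j]
        by_cases h0 : j.val = 0
        · have hwj : w j = b := by simp only [hw, h0, ↓reduceIte]
          have hsucc : p j.succ = p 1 := by
            congr 1
            apply Fin.ext
            simp [Fin.val_succ, h0]
          rw [hwj, hb, hsucc, Nat.lcm_self]
        · by_cases h1 : j.val = 1
          · have hwj : w j = c := by simp only [hw, h0, h1, one_ne_zero, ↓reduceIte]
            have hsucc : p j.succ = p 2 := by
              congr 1
              apply Fin.ext
              simp [Fin.val_succ, h1]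
              exact (Nat.mod_eq_of_lt (by omega)).symm
            rw [hwj, hc, hsucc, Nat.lcm_self]
          · have hwj : w j = 1 := by simp only [hw, h0, h1, ↓reduceIte]
            rw [hwj, orderOf_one, Nat.lcm_one_left]
    · have hofn : List.ofFn (Fin.cons ((a, (1:G)) : H × G) f) = ((a, (1:G)) :: List.ofFn f) := by
        rw [List.ofFn_succ]
        simp
      have hwprod : (List.ofFn w).prod = b * c := by
        rw [List.ofFn_succ, List.ofFn_succ]
        have h1 : w 0 = b := rfl
        have h2 : w ((0 : Fin (K + 2)).succ) = c := rfl
        rw [h1, h2]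
        have h3 : (List.ofFn fun i : Fin (K + 1) => w i.succ.succ).prod = 1 := by
          apply List.prod_eq_one
          intro x hx
          rw [List.mem_ofFn] at hx
          obtain ⟨i, rfl⟩ := hx
          simp [hw, Fin.val_succ]
        rw [List.prod_cons, List.prod_cons, h3, mul_one]
      have hfprod : (List.ofFn f).prod = (b * c, 1) := by
        have hfst : ((List.ofFn f).prod).1 = b * c := by
          rw [show ((List.ofFn f).prod).1 = (MonoidHom.fst H G) ((List.ofFn f).prod) from rfl,
            map_list_prod, List.map_ofFn, ← hwprod]
          rfl
        have hsnd : ((List.ofFn f).prod).2 = 1 := by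
          rw [show ((List.ofFn f).prod).2 = (MonoidHom.snd H G) ((List.ofFn f).prod) from rfl,
            map_list_prod, List.map_ofFn, ← hprod]
          rfl
        exact Prod.ext hfst hsnd
      rw [hofn, List.prod_cons, hfprod, Prod.mk_mul_mk, mul_one, ← mul_assoc, habc]
      rfl


end St10

/-- For any `N ≥ 3` and integers `p₁, …, p_N ≥ 2` there is a finite group `G` and elements
`y₁, …, y_N` with `y_i` of order exactly `p_i` and `y₁ ⋯ y_N = 1`. -/
theorem statement10 (N : ℕ) (hN : 3 ≤ N) (p : Fin N → ℕ) (hp : ∀ i, 2 ≤ p i) :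
    ∃ G : GrpCat, Finite G ∧ ∃ y : Fin N → G,
      (∀ i, orderOf (y i) = p i) ∧ (List.ofFn y).prod = 1 := by
  obtain ⟨G, gG, gF, y, hy, hprod⟩ := St10.main N hN p hp
  refine ⟨GrpCat.of (ULift G), inferInstanceAs (Finite (ULift G)),
    fun i => MulEquiv.ulift.symm (y i), ?_, ?_⟩
  · intro i
    rw [← hy i]
    have hinj : Function.Injective ⇑((MulEquiv.ulift (α := G)).symm.toMonoidHom) :=
      fun u v huv => by
        have := congrArg (fun z : ULift G => z.down) huv
        exact this
    exact orderOf_injective ((MulEquiv.ulift (α := G)).symm.toMonoidHom) hinj (y i)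
  · have h := map_list_prod ((MulEquiv.ulift (α := G)).symm.toMonoidHom) (List.ofFn y)
    rw [List.map_ofFn] at h
    have hco : (⇑((MulEquiv.ulift (α := G)).symm.toMonoidHom) ∘ y)
        = fun i => MulEquiv.ulift.symm (y i) := rfl
    rw [hco] at h
    rw [← h, hprod, _root_.map_one]
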